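/- Let H be a quasitriangular Hopf algebra with universal R-matrix R = R₁ ⊗ R₂, and let L be an R-quasi-commutative left H-module algebra, i.e. (R₂ ▷ ℓ₂)(R₁ ▷ ℓ₁) = ℓ₁ℓ₂ for all ℓ₁, ℓ₂ ∈ L. Then the map δ(ℓ) := R₂ ⊗ (R₁ ▷ ℓ) defines a left H-coaction on L making L a base algebra over H; in particular δ is an algebra homomorphism L → H ⊗ L and satisfies the base-algebra compatibility conditions. -/

import Mathlib

/-!
STATEMENT 2: Let `H` be a quasitriangular Hopf algebra with universal R-matrix `r`,
and `L` an `r`-quasi-commutative left `H`-module algebra. Then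
`δ(ℓ) := R₂ ⊗ (R₁ ▷ ℓ)` defines a left `H`-coaction on `L` making `L` a base algebra
over `H`: `δ` is a unital algebra homomorphism `L → H ⊗ L`, a coaction (coassociative
and counital), and the two base-algebra compatibility conditions hold.
-/

open TensorProduct LinearMap

set_option maxHeartbeats 1000000
set_option synthInstance.maxHeartbeats 400000

noncomputable section

variable (k : Type*) [CommRing k]

/-- The "rotation" `(A ⊗ B) ⊗ C → (A ⊗ C) ⊗ B`. -/
def rot3 (A B C : Type*) [AddCommGroup A] [Module k A] [AddCommGroup B] [Module k B]
    [AddCommGroup C] [Module k C] :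
    (A ⊗[k] B) ⊗[k] C →ₗ[k] (A ⊗[k] C) ⊗[k] B :=
  (TensorProduct.assoc k A C B).symm.toLinearMap ∘ₗ
    (LinearMap.lTensor A (TensorProduct.comm k B C).toLinearMap) ∘ₗ
    (TensorProduct.assoc k A B C).toLinearMap

variable {H : Type*} [Ring H] [HopfAlgebra k H]
variable {L : Type*} [Ring L] [Algebra k L]

@[simp] lemma rot3_tmul {A B C : Type*} [AddCommGroup A] [Module k A] [AddCommGroup B]
    [Module k B] [AddCommGroup C] [Module k C] (a : A) (b : B) (c : C) :
    rot3 k A B C ((a ⊗ₜ[k] b) ⊗ₜ[k] c) = (a ⊗ₜ[k] c) ⊗ₜ[k] b := by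
  simp [rot3]

variable {k}

/-- `dmap act ρ ℓ = ρ₂ ⊗ (ρ₁ ▷ ℓ)`, linear in `ρ`. -/
def dmap (act : H ⊗[k] L →ₗ[k] L) : (H ⊗[k] H) →ₗ[k] L →ₗ[k] H ⊗[k] L :=
  (LinearMap.llcomp k L ((H ⊗[k] H) ⊗[k] L) (H ⊗[k] L)
      ((LinearMap.lTensor H act) ∘ₗ (TensorProduct.assoc k H H L).toLinearMap)) ∘ₗ
    (TensorProduct.mk k (H ⊗[k] H) L) ∘ₗ (TensorProduct.comm k H H).toLinearMap

@[simp] lemma dmap_tmul (act : H ⊗[k] L →ₗ[k] L) (a b : H) (ℓ : L) :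
    dmap act (a ⊗ₜ[k] b) ℓ = b ⊗ₜ[k] act (a ⊗ₜ[k] ℓ) := by
  simp [dmap]

/-- auxiliary map for multiplicativity. -/
def dq (act : H ⊗[k] L →ₗ[k] L) (ℓ₁ ℓ₂ : L) : (H ⊗[k] H) ⊗[k] H →ₗ[k] H ⊗[k] L :=
  LinearMap.lTensor H
      ((LinearMap.mul' k L) ∘ₗ (TensorProduct.map act act) ∘ₗ
        (TensorProduct.map ((TensorProduct.mk k H L).flip ℓ₁) ((TensorProduct.mk k H L).flip ℓ₂))) ∘ₗ
    (TensorProduct.comm k (H ⊗[k] H) H).toLinearMap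

@[simp] lemma dq_tmul (act : H ⊗[k] L →ₗ[k] L) (ℓ₁ ℓ₂ : L) (z : H ⊗[k] H) (c : H) :
    dq act ℓ₁ ℓ₂ (z ⊗ₜ[k] c)
      = c ⊗ₜ[k] ((LinearMap.mul' k L) ((TensorProduct.map act act)
          ((TensorProduct.map ((TensorProduct.mk k H L).flip ℓ₁)
            ((TensorProduct.mk k H L).flip ℓ₂)) z))) := by
  simp [dq]

lemma inner_eq (act : H ⊗[k] L →ₗ[k] L) (ℓ₁ ℓ₂ : L) (z : H ⊗[k] H) :
    (LinearMap.mul' k L) ((TensorProduct.map act act)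
        ((TensorProduct.map ((TensorProduct.mk k H L).flip ℓ₁)
          ((TensorProduct.mk k H L).flip ℓ₂)) z))
      = (LinearMap.mul' k L) ((TensorProduct.map act act)
          ((TensorProduct.tensorTensorTensorComm k H H L L) (z ⊗ₜ[k] (ℓ₁ ⊗ₜ[k] ℓ₂)))) := by
  induction z using TensorProduct.induction_on with
  | zero => simp only [zero_tmul, tmul_zero, map_zero, zero_mul, mul_zero, LinearMap.zero_apply, rTensor_zero, lTensor_zero]
  | tmul x y => simp
  | add z₁ z₂ h1 h2 => simp only [add_tmul, tmul_add, map_add, add_mul, mul_add, LinearMap.add_apply, rTensor_add, lTensor_add]; rw [h1, h2]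

/-- auxiliary map for coassociativity. -/
def fq (act : H ⊗[k] L →ₗ[k] L) (ℓ : L) : H ⊗[k] (H ⊗[k] H) →ₗ[k] (H ⊗[k] H) ⊗[k] L :=
  LinearMap.lTensor (H ⊗[k] H) (act ∘ₗ (TensorProduct.mk k H L).flip ℓ) ∘ₗ
    (TensorProduct.comm k H (H ⊗[k] H)).toLinearMap

@[simp] lemma fq_tmul (act : H ⊗[k] L →ₗ[k] L) (ℓ : L) (a : H) (z : H ⊗[k] H) :
    fq act ℓ (a ⊗ₜ[k] z) = z ⊗ₜ[k] act (a ⊗ₜ[k] ℓ) := by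
  simp [fq]

variable (k)

theorem statement2
    (r : H ⊗[k] H)
    -- `r` is invertible
    (rinv : H ⊗[k] H) (hr_inv : r * rinv = 1 ∧ rinv * r = 1)
    -- quasitriangularity axioms:
    (hr1 : LinearMap.rTensor H (Coalgebra.comul (R := k)) r
            = (rot3 k H H H (r ⊗ₜ[k] (1 : H))) * ((TensorProduct.assoc k H H H).symm ((1 : H) ⊗ₜ[k] r)))
    (hr2 : LinearMap.lTensor H (Coalgebra.comul (R := k)) r
            = (TensorProduct.assoc k H H H)
                ((rot3 k H H H (r ⊗ₜ[k] (1 : H))) * (r ⊗ₜ[k] (1 : H))))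
    (hr3 : ∀ h : H, r * (Coalgebra.comul (R := k) h)
            = (TensorProduct.comm k H H (Coalgebra.comul (R := k) h)) * r)
    -- `L` is a left `H`-module algebra:
    (act : H ⊗[k] L →ₗ[k] L)
    (act_one : ∀ ℓ : L, act ((1 : H) ⊗ₜ[k] ℓ) = ℓ)
    (act_mul : ∀ (x y : H) (ℓ : L), act ((x * y) ⊗ₜ[k] ℓ) = act (x ⊗ₜ[k] act (y ⊗ₜ[k] ℓ)))
    (act_alg : ∀ (h : H) (ℓ₁ ℓ₂ : L),
      act (h ⊗ₜ[k] (ℓ₁ * ℓ₂))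
        = (LinearMap.mul' k L) ((TensorProduct.map act act)
            ((TensorProduct.tensorTensorTensorComm k H H L L)
              ((Coalgebra.comul (R := k) h) ⊗ₜ[k] (ℓ₁ ⊗ₜ[k] ℓ₂)))))
    (act_unit : ∀ h : H, act (h ⊗ₜ[k] (1 : L)) = (Coalgebra.counit (R := k) h) • (1 : L))
    -- quasi-commutativity `(R₂ ▷ ℓ₂)(R₁ ▷ ℓ₁) = ℓ₁ ℓ₂`:
    (hqc : LinearMap.mul' k L
            = (LinearMap.mul' k L) ∘ₗ (TensorProduct.map act act) ∘ₗ
                (TensorProduct.tensorTensorTensorComm k H H L L).toLinearMap ∘ₗ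
                (TensorProduct.mk k (H ⊗[k] H) (L ⊗[k] L) ((TensorProduct.comm k H H) r)) ∘ₗ
                (TensorProduct.comm k L L).toLinearMap) :
    -- the coaction `δ(ℓ) = R₂ ⊗ (R₁ ▷ ℓ)`:
    ∀ δ : L →ₗ[k] H ⊗[k] L,
      δ = (LinearMap.lTensor H act) ∘ₗ (TensorProduct.assoc k H H L).toLinearMap ∘ₗ
            (TensorProduct.mk k (H ⊗[k] H) L ((TensorProduct.comm k H H) r)) →
      -- `δ` is a unital algebra homomorphism `L → H ⊗ L`
      (∀ ℓ₁ ℓ₂ : L, δ (ℓ₁ * ℓ₂) = δ ℓ₁ * δ ℓ₂) ∧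
      δ (1 : L) = 1 ∧
      -- `δ` is a coaction: coassociativity and counitality
      (LinearMap.rTensor L (Coalgebra.comul (R := k))) ∘ₗ δ
        = (TensorProduct.assoc k H H L).symm.toLinearMap ∘ₗ (LinearMap.lTensor H δ) ∘ₗ δ ∧
      (TensorProduct.lid k L).toLinearMap ∘ₗ
          (LinearMap.rTensor L (Coalgebra.counit (R := k))) ∘ₗ δ = LinearMap.id ∧
      -- base-algebra condition (i):
      (LinearMap.rTensor L (LinearMap.mul' k H)) ∘ₗ (rot3 k H L H) ∘ₗ
          (LinearMap.rTensor H δ) ∘ₗ (LinearMap.rTensor H act) ∘ₗ (rot3 k H H L) ∘ₗ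
          (LinearMap.rTensor L (Coalgebra.comul (R := k)))
        = (TensorProduct.map (LinearMap.mul' k H) act) ∘ₗ
            (TensorProduct.tensorTensorTensorComm k H H H L).toLinearMap ∘ₗ
            (TensorProduct.map (Coalgebra.comul (R := k)) δ) ∧
      -- base-algebra condition (ii): `ℓ₁ℓ₂ = (ℓ₁⁽¹⁾ ▷ ℓ₂) ℓ₁⁽²⁾`
      LinearMap.mul' k L
        = (LinearMap.mul' k L) ∘ₗ (LinearMap.rTensor L act) ∘ₗ (rot3 k H L L) ∘ₗ
            (LinearMap.rTensor L δ) := by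
  obtain ⟨hri, hir⟩ := hr_inv
  intro δ hδ
  have hδd : δ = dmap act r := by
    rw [hδ]; ext ℓ; simp [dmap]
  -- multiplicativity
  have k1 : ∀ (ℓ₁ ℓ₂ : L) (ρ : H ⊗[k] H),
      dmap act ρ (ℓ₁ * ℓ₂) = dq act ℓ₁ ℓ₂ (LinearMap.rTensor H (Coalgebra.comul (R := k)) ρ) := by
    intro ℓ₁ ℓ₂ ρ
    induction ρ using TensorProduct.induction_on with
    | zero => simp only [zero_tmul, tmul_zero, map_zero, zero_mul, mul_zero, LinearMap.zero_apply, rTensor_zero, lTensor_zero]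
    | tmul a b => simp [act_alg a ℓ₁ ℓ₂, inner_eq]
    | add z₁ z₂ h1 h2 => simp only [add_tmul, tmul_add, map_add, add_mul, mul_add, LinearMap.add_apply, rTensor_add, lTensor_add]; rw [h1, h2]
  have k2 : ∀ (ℓ₁ ℓ₂ : L) (ρ σ : H ⊗[k] H),
      dq act ℓ₁ ℓ₂ ((rot3 k H H H (ρ ⊗ₜ[k] (1 : H))) *
          ((TensorProduct.assoc k H H H).symm ((1 : H) ⊗ₜ[k] σ)))
        = dmap act ρ ℓ₁ * dmap act σ ℓ₂ := by
    intro ℓ₁ ℓ₂ ρ σ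
    induction ρ using TensorProduct.induction_on with
    | zero => simp only [zero_tmul, tmul_zero, map_zero, zero_mul, mul_zero, LinearMap.zero_apply, rTensor_zero, lTensor_zero]
    | tmul a b =>
      induction σ using TensorProduct.induction_on with
      | zero => simp only [zero_tmul, tmul_zero, map_zero, zero_mul, mul_zero, LinearMap.zero_apply, rTensor_zero, lTensor_zero]
      | tmul c d => simp [Algebra.TensorProduct.tmul_mul_tmul]
      | add σ₁ σ₂ h1 h2 => simp only [add_tmul, tmul_add, map_add, add_mul, mul_add, LinearMap.add_apply, rTensor_add, lTensor_add]; rw [h1, h2]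
    | add ρ₁ ρ₂ h1 h2 => simp only [add_tmul, tmul_add, map_add, add_mul, mul_add, LinearMap.add_apply, rTensor_add, lTensor_add]; rw [h1, h2]
  -- unit
  have eid : ∀ ρ : H ⊗[k] H,
      LinearMap.rTensor H ((TensorProduct.lid k H).toLinearMap ∘ₗ
          LinearMap.rTensor H (Coalgebra.counit (R := k)))
        (LinearMap.rTensor H (Coalgebra.comul (R := k)) ρ) = ρ := by
    intro ρ
    induction ρ using TensorProduct.induction_on with
    | zero => simp only [zero_tmul, tmul_zero, map_zero, zero_mul, mul_zero, LinearMap.zero_apply, rTensor_zero, lTensor_zero]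
    | tmul a b => simp [Coalgebra.rTensor_counit_comul]
    | add z₁ z₂ h1 h2 => simp only [add_tmul, tmul_add, map_add, add_mul, mul_add, LinearMap.add_apply, rTensor_add, lTensor_add]; rw [h1, h2]
  have e2 : ∀ ρ σ : H ⊗[k] H,
      LinearMap.rTensor H ((TensorProduct.lid k H).toLinearMap ∘ₗ
          LinearMap.rTensor H (Coalgebra.counit (R := k)))
        ((rot3 k H H H (ρ ⊗ₜ[k] (1 : H))) *
          ((TensorProduct.assoc k H H H).symm ((1 : H) ⊗ₜ[k] σ)))
        = ((1 : H) ⊗ₜ[k] ((TensorProduct.lid k H)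
            (LinearMap.rTensor H (Coalgebra.counit (R := k)) ρ))) * σ := by
    intro ρ σ
    induction ρ using TensorProduct.induction_on with
    | zero => simp only [zero_tmul, tmul_zero, map_zero, zero_mul, mul_zero, LinearMap.zero_apply, rTensor_zero, lTensor_zero]
    | tmul a b =>
      induction σ using TensorProduct.induction_on with
      | zero => simp only [zero_tmul, tmul_zero, map_zero, zero_mul, mul_zero, LinearMap.zero_apply, rTensor_zero, lTensor_zero]
      | tmul c d =>
        simp [Algebra.TensorProduct.tmul_mul_tmul, smul_tmul', tmul_smul, smul_mul_assoc]
      | add σ₁ σ₂ h1 h2 => simp only [add_tmul, tmul_add, map_add, add_mul, mul_add, LinearMap.add_apply, rTensor_add, lTensor_add]; rw [h1, h2]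
    | add ρ₁ ρ₂ h1 h2 => simp only [add_tmul, tmul_add, map_add, add_mul, mul_add, LinearMap.add_apply, rTensor_add, lTensor_add]; rw [h1, h2]
  set u : H := (TensorProduct.lid k H)
      (LinearMap.rTensor H (Coalgebra.counit (R := k)) r) with hu_def
  have hru : r = ((1 : H) ⊗ₜ[k] u) * r := by
    calc r = LinearMap.rTensor H ((TensorProduct.lid k H).toLinearMap ∘ₗ
              LinearMap.rTensor H (Coalgebra.counit (R := k)))
            (LinearMap.rTensor H (Coalgebra.comul (R := k)) r) := (eid r).symm
      _ = ((1 : H) ⊗ₜ[k] u) * r := by rw [hr1]; exact e2 r r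
  have hone : (1 : H ⊗[k] H) = (1 : H) ⊗ₜ[k] u := by
    calc (1 : H ⊗[k] H) = r * rinv := hri.symm
      _ = (((1 : H) ⊗ₜ[k] u) * r) * rinv := by rw [← hru]
      _ = ((1 : H) ⊗ₜ[k] u) * (r * rinv) := mul_assoc _ _ _
      _ = (1 : H) ⊗ₜ[k] u := by rw [hri, mul_one]
  have hδ1 : δ (1 : L) = u ⊗ₜ[k] (1 : L) := by
    rw [hδd]
    have : ∀ ρ : H ⊗[k] H, dmap act ρ (1 : L)
        = ((TensorProduct.lid k H) (LinearMap.rTensor H (Coalgebra.counit (R := k)) ρ))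
            ⊗ₜ[k] (1 : L) := by
      intro ρ
      induction ρ using TensorProduct.induction_on with
      | zero => simp only [zero_tmul, tmul_zero, map_zero, zero_mul, mul_zero, LinearMap.zero_apply, rTensor_zero, lTensor_zero]
      | tmul a b => simp [act_unit, smul_tmul', tmul_smul]
      | add z₁ z₂ h1 h2 => simp only [add_tmul, tmul_add, map_add, add_mul, mul_add, LinearMap.add_apply, rTensor_add, lTensor_add]; rw [h1, h2]
    exact this r
  have conj2 : δ (1 : L) = 1 := by
    set f : H ⊗[k] H →ₗ[k] H ⊗[k] L :=
      (TensorProduct.lid k (H ⊗[k] L)).toLinearMap ∘ₗ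
        (TensorProduct.map (Coalgebra.counit (R := k)) ((TensorProduct.mk k H L).flip 1))
      with hf_def
    have hf : ∀ x y : H, f (x ⊗ₜ[k] y)
        = (Coalgebra.counit (R := k) x) • (y ⊗ₜ[k] (1 : L)) := by
      intro x y; simp [hf_def]
    calc δ (1 : L) = u ⊗ₜ[k] (1 : L) := hδ1
      _ = f ((1 : H) ⊗ₜ[k] u) := by rw [hf]; simp
      _ = f 1 := by rw [← hone]
      _ = 1 := by
          rw [Algebra.TensorProduct.one_def, hf]
          simp [Algebra.TensorProduct.one_def]
  -- coassociativity
  have k3 : ∀ (ℓ : L) (ρ : H ⊗[k] H),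
      LinearMap.rTensor L (Coalgebra.comul (R := k)) (dmap act ρ ℓ)
        = fq act ℓ (LinearMap.lTensor H (Coalgebra.comul (R := k)) ρ) := by
    intro ℓ ρ
    induction ρ using TensorProduct.induction_on with
    | zero => simp only [zero_tmul, tmul_zero, map_zero, zero_mul, mul_zero, LinearMap.zero_apply, rTensor_zero, lTensor_zero]
    | tmul a b => simp
    | add z₁ z₂ h1 h2 => simp only [add_tmul, tmul_add, map_add, add_mul, mul_add, LinearMap.add_apply, rTensor_add, lTensor_add]; rw [h1, h2]
  have k4 : ∀ (ℓ : L) (ρ σ : H ⊗[k] H),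
      fq act ℓ ((TensorProduct.assoc k H H H)
          ((rot3 k H H H (ρ ⊗ₜ[k] (1 : H))) * (σ ⊗ₜ[k] (1 : H))))
        = (TensorProduct.assoc k H H L).symm
            ((LinearMap.lTensor H (dmap act ρ)) (dmap act σ ℓ)) := by
    intro ℓ ρ σ
    induction ρ using TensorProduct.induction_on with
    | zero => simp only [zero_tmul, tmul_zero, map_zero, zero_mul, mul_zero, LinearMap.zero_apply, rTensor_zero, lTensor_zero]
    | tmul a b =>
      induction σ using TensorProduct.induction_on with
      | zero => simp only [zero_tmul, tmul_zero, map_zero, zero_mul, mul_zero, LinearMap.zero_apply, rTensor_zero, lTensor_zero]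
      | tmul c d => simp [Algebra.TensorProduct.tmul_mul_tmul, act_mul]
      | add σ₁ σ₂ h1 h2 => simp only [add_tmul, tmul_add, map_add, add_mul, mul_add, LinearMap.add_apply, rTensor_add, lTensor_add]; rw [h1, h2]
    | add ρ₁ ρ₂ h1 h2 => simp only [add_tmul, tmul_add, map_add, add_mul, mul_add, LinearMap.add_apply, rTensor_add, lTensor_add]; rw [h1, h2]
  have conj3 : (LinearMap.rTensor L (Coalgebra.comul (R := k))) ∘ₗ δ
      = (TensorProduct.assoc k H H L).symm.toLinearMap ∘ₗ (LinearMap.lTensor H δ) ∘ₗ δ := by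
    apply LinearMap.ext; intro ℓ
    simp only [coe_comp, Function.comp_apply, LinearEquiv.coe_coe]
    calc LinearMap.rTensor L (Coalgebra.comul (R := k)) (δ ℓ)
        = fq act ℓ (LinearMap.lTensor H (Coalgebra.comul (R := k)) r) := by
          rw [hδd]; exact k3 ℓ r
      _ = (TensorProduct.assoc k H H L).symm
            ((LinearMap.lTensor H (dmap act r)) (dmap act r ℓ)) := by
          rw [hr2]; exact k4 ℓ r r
      _ = (TensorProduct.assoc k H H L).symm ((LinearMap.lTensor H δ) (δ ℓ)) := by
          rw [hδd]
  -- counitality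
  have eid2 : ∀ ρ : H ⊗[k] H,
      LinearMap.lTensor H ((TensorProduct.rid k H).toLinearMap ∘ₗ
          LinearMap.lTensor H (Coalgebra.counit (R := k)))
        (LinearMap.lTensor H (Coalgebra.comul (R := k)) ρ) = ρ := by
    intro ρ
    induction ρ using TensorProduct.induction_on with
    | zero => simp only [zero_tmul, tmul_zero, map_zero, zero_mul, mul_zero, LinearMap.zero_apply, rTensor_zero, lTensor_zero]
    | tmul a b => simp [Coalgebra.lTensor_counit_comul]
    | add z₁ z₂ h1 h2 => simp only [add_tmul, tmul_add, map_add, add_mul, mul_add, LinearMap.add_apply, rTensor_add, lTensor_add]; rw [h1, h2]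
  have e4 : ∀ ρ σ : H ⊗[k] H,
      LinearMap.lTensor H ((TensorProduct.rid k H).toLinearMap ∘ₗ
          LinearMap.lTensor H (Coalgebra.counit (R := k)))
        ((TensorProduct.assoc k H H H)
          ((rot3 k H H H (ρ ⊗ₜ[k] (1 : H))) * (σ ⊗ₜ[k] (1 : H))))
        = (((TensorProduct.rid k H)
            (LinearMap.lTensor H (Coalgebra.counit (R := k)) ρ)) ⊗ₜ[k] (1 : H)) * σ := by
    intro ρ σ
    induction ρ using TensorProduct.induction_on with
    | zero => simp only [zero_tmul, tmul_zero, map_zero, zero_mul, mul_zero, LinearMap.zero_apply, rTensor_zero, lTensor_zero]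
    | tmul a b =>
      induction σ using TensorProduct.induction_on with
      | zero => simp only [zero_tmul, tmul_zero, map_zero, zero_mul, mul_zero, LinearMap.zero_apply, rTensor_zero, lTensor_zero]
      | tmul c d =>
        simp [Algebra.TensorProduct.tmul_mul_tmul, smul_tmul', tmul_smul, smul_mul_assoc]
      | add σ₁ σ₂ h1 h2 => simp only [add_tmul, tmul_add, map_add, add_mul, mul_add, LinearMap.add_apply, rTensor_add, lTensor_add]; rw [h1, h2]
    | add ρ₁ ρ₂ h1 h2 => simp only [add_tmul, tmul_add, map_add, add_mul, mul_add, LinearMap.add_apply, rTensor_add, lTensor_add]; rw [h1, h2]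
  set v : H := (TensorProduct.rid k H)
      (LinearMap.lTensor H (Coalgebra.counit (R := k)) r) with hv_def
  have hrv : r = (v ⊗ₜ[k] (1 : H)) * r := by
    calc r = LinearMap.lTensor H ((TensorProduct.rid k H).toLinearMap ∘ₗ
              LinearMap.lTensor H (Coalgebra.counit (R := k)))
            (LinearMap.lTensor H (Coalgebra.comul (R := k)) r) := (eid2 r).symm
      _ = (v ⊗ₜ[k] (1 : H)) * r := by rw [hr2]; exact e4 r r
  have honev : (1 : H ⊗[k] H) = v ⊗ₜ[k] (1 : H) := by
    calc (1 : H ⊗[k] H) = r * rinv := hri.symm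
      _ = ((v ⊗ₜ[k] (1 : H)) * r) * rinv := by rw [← hrv]
      _ = (v ⊗ₜ[k] (1 : H)) * (r * rinv) := mul_assoc _ _ _
      _ = v ⊗ₜ[k] (1 : H) := by rw [hri, mul_one]
  have conj4 : (TensorProduct.lid k L).toLinearMap ∘ₗ
      (LinearMap.rTensor L (Coalgebra.counit (R := k))) ∘ₗ δ = LinearMap.id := by
    apply LinearMap.ext; intro ℓ
    simp only [coe_comp, Function.comp_apply, LinearEquiv.coe_coe, id_coe, id_eq]
    have hc : ∀ ρ : H ⊗[k] H,
        (TensorProduct.lid k L) (LinearMap.rTensor L (Coalgebra.counit (R := k)) (dmap act ρ ℓ))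
          = act (((TensorProduct.rid k H)
              (LinearMap.lTensor H (Coalgebra.counit (R := k)) ρ)) ⊗ₜ[k] ℓ) := by
      intro ρ
      induction ρ using TensorProduct.induction_on with
      | zero => simp only [zero_tmul, tmul_zero, map_zero, zero_mul, mul_zero, LinearMap.zero_apply, rTensor_zero, lTensor_zero]
      | tmul a b =>
        simp only [dmap_tmul, rTensor_tmul, lTensor_tmul, lid_tmul, rid_tmul]
        rw [← smul_tmul', map_smul]
      | add z₁ z₂ h1 h2 => simp only [add_tmul, tmul_add, map_add, add_mul, mul_add, LinearMap.add_apply, rTensor_add, lTensor_add]; rw [h1, h2]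
    set g : H ⊗[k] H →ₗ[k] L :=
      act ∘ₗ LinearMap.lTensor H ((Coalgebra.counit (R := k)).smulRight ℓ) with hg_def
    have hg : ∀ x y : H, g (x ⊗ₜ[k] y) = (Coalgebra.counit (R := k) y) • act (x ⊗ₜ[k] ℓ) := by
      intro x y; simp [hg_def, tmul_smul]
    calc (TensorProduct.lid k L) (LinearMap.rTensor L (Coalgebra.counit (R := k)) (δ ℓ))
        = act (v ⊗ₜ[k] ℓ) := by rw [hδd]; exact hc r
      _ = g (v ⊗ₜ[k] (1 : H)) := by rw [hg]; simp
      _ = g 1 := by rw [← honev]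
      _ = ℓ := by rw [Algebra.TensorProduct.one_def, hg]; simp [act_one]
  -- base-algebra condition (i)
  have k5a : ∀ (ℓ : L) (z ρ : H ⊗[k] H),
      LinearMap.rTensor L (LinearMap.mul' k H)
          (rot3 k H L H (LinearMap.rTensor H (dmap act ρ)
            (LinearMap.rTensor H act (rot3 k H H L (z ⊗ₜ[k] ℓ)))))
        = dmap act (ρ * z) ℓ := by
    intro ℓ z ρ
    induction z using TensorProduct.induction_on with
    | zero => simp only [zero_tmul, tmul_zero, map_zero, zero_mul, mul_zero, LinearMap.zero_apply, rTensor_zero, lTensor_zero]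
    | tmul x₁ x₂ =>
      induction ρ using TensorProduct.induction_on with
      | zero => simp only [zero_tmul, tmul_zero, map_zero, zero_mul, mul_zero, LinearMap.zero_apply, rTensor_zero, lTensor_zero]
      | tmul a b => simp [Algebra.TensorProduct.tmul_mul_tmul, act_mul, mul'_apply]
      | add ρ₁ ρ₂ h1 h2 => simp only [add_tmul, tmul_add, map_add, add_mul, mul_add, LinearMap.add_apply, rTensor_add, lTensor_add]; rw [h1, h2]
    | add z₁ z₂ h1 h2 => simp only [add_tmul, tmul_add, map_add, add_mul, mul_add, LinearMap.add_apply, rTensor_add, lTensor_add]; rw [h1, h2]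
  have k5b : ∀ (ℓ : L) (z ρ : H ⊗[k] H),
      (TensorProduct.map (LinearMap.mul' k H) act)
          ((TensorProduct.tensorTensorTensorComm k H H H L) (z ⊗ₜ[k] (dmap act ρ ℓ)))
        = dmap act (((TensorProduct.comm k H H) z) * ρ) ℓ := by
    intro ℓ z ρ
    induction z using TensorProduct.induction_on with
    | zero => simp only [zero_tmul, tmul_zero, map_zero, zero_mul, mul_zero, LinearMap.zero_apply, rTensor_zero, lTensor_zero]
    | tmul x₁ x₂ =>
      induction ρ using TensorProduct.induction_on with
      | zero => simp only [zero_tmul, tmul_zero, map_zero, zero_mul, mul_zero, LinearMap.zero_apply, rTensor_zero, lTensor_zero]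
      | tmul a b => simp [Algebra.TensorProduct.tmul_mul_tmul, act_mul, mul'_apply]
      | add ρ₁ ρ₂ h1 h2 => simp only [add_tmul, tmul_add, map_add, add_mul, mul_add, LinearMap.add_apply, rTensor_add, lTensor_add]; rw [h1, h2]
    | add z₁ z₂ h1 h2 => simp [add_tmul, map_add, add_mul, h1, h2]
  have conj5 : (LinearMap.rTensor L (LinearMap.mul' k H)) ∘ₗ (rot3 k H L H) ∘ₗ
      (LinearMap.rTensor H δ) ∘ₗ (LinearMap.rTensor H act) ∘ₗ (rot3 k H H L) ∘ₗ
      (LinearMap.rTensor L (Coalgebra.comul (R := k)))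
        = (TensorProduct.map (LinearMap.mul' k H) act) ∘ₗ
            (TensorProduct.tensorTensorTensorComm k H H H L).toLinearMap ∘ₗ
            (TensorProduct.map (Coalgebra.comul (R := k)) δ) := by
    rw [hδd]
    apply TensorProduct.ext'; intro x ℓ
    simp only [coe_comp, Function.comp_apply, LinearEquiv.coe_coe, rTensor_tmul, map_tmul]
    rw [k5a ℓ (Coalgebra.comul (R := k) x) r, k5b ℓ (Coalgebra.comul (R := k) x) r, hr3 x]
  -- base-algebra condition (ii)
  have k6 : ∀ (ℓ₁ ℓ₂ : L) (ρ : H ⊗[k] H),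
      LinearMap.mul' k L (LinearMap.rTensor L act
          (rot3 k H L L ((dmap act ρ ℓ₁) ⊗ₜ[k] ℓ₂)))
        = LinearMap.mul' k L ((TensorProduct.map act act)
            ((TensorProduct.tensorTensorTensorComm k H H L L)
              (((TensorProduct.comm k H H) ρ) ⊗ₜ[k] (ℓ₂ ⊗ₜ[k] ℓ₁)))) := by
    intro ℓ₁ ℓ₂ ρ
    induction ρ using TensorProduct.induction_on with
    | zero => simp only [zero_tmul, tmul_zero, map_zero, zero_mul, mul_zero, LinearMap.zero_apply, rTensor_zero, lTensor_zero]
    | tmul a b => simp [mul'_apply]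
    | add z₁ z₂ h1 h2 => simp only [add_tmul, tmul_add, map_add, add_mul, mul_add, LinearMap.add_apply, rTensor_add, lTensor_add]; rw [h1, h2]
  have conj6 : LinearMap.mul' k L
      = (LinearMap.mul' k L) ∘ₗ (LinearMap.rTensor L act) ∘ₗ (rot3 k H L L) ∘ₗ
          (LinearMap.rTensor L δ) := by
    rw [hδd]
    apply TensorProduct.ext'; intro ℓ₁ ℓ₂
    simp only [coe_comp, Function.comp_apply, rTensor_tmul]
    rw [k6 ℓ₁ ℓ₂ r]
    have hq := LinearMap.congr_fun hqc (ℓ₁ ⊗ₜ[k] ℓ₂)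
    simpa using hq
  refine ⟨?_, conj2, conj3, conj4, conj5, conj6⟩
  intro ℓ₁ ℓ₂
  calc δ (ℓ₁ * ℓ₂) = dmap act r (ℓ₁ * ℓ₂) := by rw [hδd]
    _ = dq act ℓ₁ ℓ₂ (LinearMap.rTensor H (Coalgebra.comul (R := k)) r) := k1 ℓ₁ ℓ₂ r
    _ = dmap act r ℓ₁ * dmap act r ℓ₂ := by rw [hr1]; exact k2 ℓ₁ ℓ₂ r r
    _ = δ ℓ₁ * δ ℓ₂ := by rw [hδd]

end
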